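/- arXiv:1705.01310 — 2 statements merged into one kernel-verified Lean document; each statement's English description precedes it below -/
import Mathlib

section
/- Let N ≥ 2, s ∈ (0,1), β < N, and let t ∈ [-1,1) (playing the role of ⟨σ,η⟩). Then the improper integral ∫_1^∞ (τ^{-β} - 1) τ^{N-1} / (1 + τ² - 2τt)^{N/2+s} dτ equals -∫_0^1 (τ^{-β} - 1) τ^{N-1+c_s} / (1 + τ² - 2τt)^{N/2+s} dτ, where c_s := β + 2s - N. Consequently, B(t) := ∫_0^∞ (τ^{-β} - 1) τ^{N-1} / (1 + τ² - 2τt)^{N/2+s} dτ = ∫_0^1 (τ^{-β} - 1)(τ^{N-1} - τ^{N-1+c_s}) / (1 + τ² - 2τt)^{N/2+s} dτ. -/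
open MeasureTheory Set

private lemma quad_pos {t τ : ℝ} (ht1 : -1 ≤ t) (ht2 : t < 1) (hτ : 0 < τ) :
    0 < 1 + τ^2 - 2*τ*t := by
  nlinarith [sq_nonneg (1-τ), mul_pos hτ (by linarith : (0:ℝ) < 1-t)]

private lemma quad_lb {t τ : ℝ} (ht1 : -1 ≤ t) (ht2 : t < 1) (hτ : 0 < τ) :
    (1 - t)/2 * (1 + τ^2) ≤ 1 + τ^2 - 2*τ*t := by
  nlinarith [mul_nonneg (by linarith : (0:ℝ) ≤ 1+t) (sq_nonneg (1-τ)),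
    mul_pos hτ (by linarith : (0:ℝ) < 1-t)]

private lemma key_pt {N s β t : ℝ} (ht1 : -1 ≤ t) (ht2 : t < 1) {x : ℝ}
    (hx0 : 0 < x) (hx1 : x < 1) :
    |(-(x^2)⁻¹)| • (((x⁻¹) ^ (-β) - 1) * (x⁻¹) ^ (N - 1) /
        (1 + (x⁻¹) ^ 2 - 2 * x⁻¹ * t) ^ (N / 2 + s))
      = -((x ^ (-β) - 1) * x ^ (N - 1 + (β + 2 * s - N)) /
        (1 + x ^ 2 - 2 * x * t) ^ (N / 2 + s)) := by
  have hxne : x ≠ 0 := ne_of_gt hx0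
  have hA : 0 < 1 + x^2 - 2*x*t := quad_pos ht1 ht2 hx0
  have hbase : 1 + (x⁻¹)^2 - 2*x⁻¹*t = (1 + x^2 - 2*x*t) / x^2 := by
    field_simp; ring
  have hP : 0 < (1 + x^2 - 2*x*t) ^ (N/2 + s) := Real.rpow_pos_of_pos hA _
  have h1 : ((x^2:ℝ)) ^ (N/2+s) = x ^ (N + 2*s) := by
    rw [← Real.rpow_natCast x 2, ← Real.rpow_mul hx0.le]
    norm_num
    ring_nf
  have h2 : ((x^2:ℝ))⁻¹ = x ^ ((-2):ℝ) := by
    rw [← Real.rpow_natCast x 2, ← Real.rpow_neg hx0.le]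
    norm_num
  rw [hbase, Real.div_rpow hA.le (sq_nonneg x), Real.inv_rpow hx0.le, Real.inv_rpow hx0.le,
    ← Real.rpow_neg hx0.le, ← Real.rpow_neg hx0.le, neg_neg, h1]
  rw [abs_neg, abs_inv, abs_of_nonneg (sq_nonneg x), smul_eq_mul, h2]
  rw [div_div_eq_mul_div, mul_div_assoc', ← neg_div]
  congr 1
  simp only [sub_mul, mul_sub, mul_one, one_mul, neg_sub, ← Real.rpow_add hx0]
  rw [show (-2:ℝ) + (β + (1 - N) + (N + 2 * s)) = N - 1 + (β + 2*s - N) by ring,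
    show (-2:ℝ) + (1 - N + (N + 2 * s)) = -β + (N - 1 + (β + 2*s - N)) by ring]

theorem stmt0 (N s β t : ℝ) (hN : 2 ≤ N) (hs : s ∈ Set.Ioo (0:ℝ) 1)
    (hβ : β < N) (ht : t ∈ Set.Ico (-1:ℝ) 1) :
    (∫ τ in Set.Ioi (1:ℝ),
        (τ ^ (-β) - 1) * τ ^ (N - 1) / (1 + τ ^ 2 - 2 * τ * t) ^ (N / 2 + s))
      = -∫ τ in Set.Ioo (0:ℝ) 1,
        (τ ^ (-β) - 1) * τ ^ (N - 1 + (β + 2 * s - N)) /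
          (1 + τ ^ 2 - 2 * τ * t) ^ (N / 2 + s) ∧
    (∫ τ in Set.Ioi (0:ℝ),
        (τ ^ (-β) - 1) * τ ^ (N - 1) / (1 + τ ^ 2 - 2 * τ * t) ^ (N / 2 + s))
      = ∫ τ in Set.Ioo (0:ℝ) 1,
        (τ ^ (-β) - 1) * (τ ^ (N - 1) - τ ^ (N - 1 + (β + 2 * s - N))) /
          (1 + τ ^ 2 - 2 * τ * t) ^ (N / 2 + s) := by
  obtain ⟨hs0, hs1⟩ := hs
  obtain ⟨ht1, ht2⟩ := ht
  set f : ℝ → ℝ := fun τ =>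
    (τ ^ (-β) - 1) * τ ^ (N - 1) / (1 + τ ^ 2 - 2 * τ * t) ^ (N / 2 + s) with hf
  set g : ℝ → ℝ := fun τ =>
    (τ ^ (-β) - 1) * τ ^ (N - 1 + (β + 2 * s - N)) /
      (1 + τ ^ 2 - 2 * τ * t) ^ (N / 2 + s) with hg
  set r : ℝ → ℝ := fun τ =>
    (τ ^ (-β) - 1) * (τ ^ (N - 1) - τ ^ (N - 1 + (β + 2 * s - N))) /
      (1 + τ ^ 2 - 2 * τ * t) ^ (N / 2 + s) with hr
  have himg : ((fun x : ℝ => x⁻¹) '' Ioo 0 1) = Ioi 1 := by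
    ext y
    simp only [mem_image, mem_Ioo, mem_Ioi]
    constructor
    · rintro ⟨x, ⟨hx0, hx1⟩, rfl⟩
      exact (one_lt_inv₀ hx0).2 hx1
    · intro hy
      exact ⟨y⁻¹, ⟨inv_pos.2 (by linarith), (inv_lt_one₀ (by linarith)).2 hy⟩, inv_inv y⟩
  have hderiv : ∀ x ∈ Ioo (0:ℝ) 1,
      HasDerivWithinAt (fun y : ℝ => y⁻¹) (-(x^2)⁻¹) (Ioo 0 1) x :=
    fun x hx => (hasDerivAt_inv (ne_of_gt hx.1)).hasDerivWithinAt
  have hinj : InjOn (fun y : ℝ => y⁻¹) (Ioo 0 1) := fun a _ b _ h => inv_injective h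
  have hpt : ∀ x ∈ Ioo (0:ℝ) 1, |(-(x^2)⁻¹)| • f x⁻¹ = -g x :=
    fun x hx => key_pt ht1 ht2 hx.1 hx.2
  have E1 : (∫ τ in Ioi (1:ℝ), f τ) = -∫ τ in Ioo (0:ℝ) 1, g τ := by
    rw [← himg, integral_image_eq_integral_abs_deriv_smul measurableSet_Ioo hderiv hinj f,
      setIntegral_congr_fun measurableSet_Ioo hpt, integral_neg]
  have E2 : IntegrableOn f (Ioi 1) ↔ IntegrableOn g (Ioo 0 1) := by
    rw [← himg, integrableOn_image_iff_integrableOn_abs_deriv_smul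
        measurableSet_Ioo hderiv hinj f,
      integrableOn_congr_fun hpt measurableSet_Ioo]
    exact integrable_neg_iff
  -- integrability of f on Ioo 0 1
  have hC : (0:ℝ) < (1-t)/2 := by linarith
  have hNs : (0:ℝ) ≤ N/2 + s := by linarith
  set C : ℝ := (((1-t)/2) ^ (N/2+s))⁻¹ with hCdef
  have hCpos : 0 < C := inv_pos.2 (Real.rpow_pos_of_pos hC _)
  have hmaj : ∀ x ∈ Ioo (0:ℝ) 1, ‖f x‖ ≤ C * (x ^ (N-1-β) + x ^ (N-1)) := by
    intro x hx
    obtain ⟨hx0, hx1⟩ := hx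
    have hA : 0 < 1 + x^2 - 2*x*t := quad_pos ht1 ht2 hx0
    have hD : ((1-t)/2) ^ (N/2+s) ≤ (1 + x^2 - 2*x*t) ^ (N/2+s) := by
      apply Real.rpow_le_rpow hC.le _ hNs
      calc (1-t)/2 ≤ (1-t)/2 * (1 + x^2) := by nlinarith [sq_nonneg x]
        _ ≤ 1 + x^2 - 2*x*t := quad_lb ht1 ht2 hx0
    have hPpos : 0 < (1 + x^2 - 2*x*t) ^ (N/2+s) := Real.rpow_pos_of_pos hA _
    have hnum : |x ^ (-β) - 1| * x ^ (N-1) ≤ x ^ (N-1-β) + x ^ (N-1) := by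
      have h1 : |x ^ (-β) - 1| ≤ x ^ (-β) + 1 := by
        have := Real.rpow_pos_of_pos hx0 (-β)
        rw [abs_sub_le_iff]; constructor <;> linarith
      have h2 : x ^ (-β) * x ^ (N-1) = x ^ (N-1-β) := by
        rw [← Real.rpow_add hx0]; ring_nf
      calc |x ^ (-β) - 1| * x ^ (N-1) ≤ (x ^ (-β) + 1) * x ^ (N-1) :=
            mul_le_mul_of_nonneg_right h1 (Real.rpow_pos_of_pos hx0 _).le
        _ = x ^ (N-1-β) + x ^ (N-1) := by rw [add_mul, one_mul, h2]
    have : ‖f x‖ = |x ^ (-β) - 1| * x ^ (N-1) / (1 + x^2 - 2*x*t) ^ (N/2+s) := by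
      rw [hf]
      simp only [Real.norm_eq_abs, abs_div, abs_mul,
        abs_of_pos hPpos, abs_of_pos (Real.rpow_pos_of_pos hx0 (N-1))]
    rw [this, div_le_iff₀ hPpos, hCdef]
    calc |x ^ (-β) - 1| * x ^ (N-1) ≤ x ^ (N-1-β) + x ^ (N-1) := hnum
      _ = (((1-t)/2) ^ (N/2+s))⁻¹ * (x ^ (N-1-β) + x ^ (N-1)) * ((1-t)/2) ^ (N/2+s) := by
          field_simp
      _ ≤ (((1-t)/2) ^ (N/2+s))⁻¹ * (x ^ (N-1-β) + x ^ (N-1)) * (1 + x^2 - 2*x*t) ^ (N/2+s) := by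
          apply mul_le_mul_of_nonneg_left hD
          positivity
  have hmeas : ∀ u : Set ℝ, AEStronglyMeasurable f (volume.restrict u) := by
    intro u
    apply Measurable.aestronglyMeasurable
    apply Measurable.div
    · exact ((measurable_id.pow measurable_const).sub measurable_const).mul
        (measurable_id.pow measurable_const)
    · exact (((measurable_const.add (measurable_id.pow_const 2)).sub
        ((measurable_const.mul measurable_id).mul measurable_const))).pow measurable_const
  have hmajint : IntegrableOn (fun x : ℝ => C * (x ^ (N-1-β) + x ^ (N-1))) (Ioo 0 1) := by
    have i1 : IntegrableOn (fun x : ℝ => x ^ (N-1-β)) (Ioo 0 1) :=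
      ((intervalIntegral.intervalIntegrable_rpow'
        (by linarith : (-1:ℝ) < N-1-β)).1).mono_set Ioo_subset_Ioc_self
    have i2 : IntegrableOn (fun x : ℝ => x ^ (N-1)) (Ioo 0 1) :=
      ((intervalIntegral.intervalIntegrable_rpow'
        (by linarith : (-1:ℝ) < N-1)).1).mono_set Ioo_subset_Ioc_self
    exact (i1.add i2).const_mul C
  have hf01 : IntegrableOn f (Ioo 0 1) := by
    apply Integrable.mono hmajint (hmeas _)
    filter_upwards [ae_restrict_mem measurableSet_Ioo] with x hx
    refine (hmaj x hx).trans ?_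
    have h0 : 0 ≤ C * (x ^ (N-1-β) + x ^ (N-1)) := by
      have := Real.rpow_pos_of_pos hx.1 (N-1-β)
      have := Real.rpow_pos_of_pos hx.1 (N-1)
      positivity
    rw [Real.norm_eq_abs, abs_of_nonneg h0]
  have hfr : ∀ x ∈ Ioo (0:ℝ) 1, f x - g x = r x := by
    intro x _
    simp only [hf, hg, hr]
    ring
  refine ⟨E1, ?_⟩
  by_cases hcase : IntegrableOn f (Ioi 1)
  · have hg01 : IntegrableOn g (Ioo 0 1) := E2.1 hcase
    have hfIoc : IntegrableOn f (Ioc 0 1) := by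
      rwa [integrableOn_Ioc_iff_integrableOn_Ioo]
    have hsplit : (∫ τ in Ioi (0:ℝ), f τ)
        = (∫ τ in Ioc (0:ℝ) 1, f τ) + ∫ τ in Ioi (1:ℝ), f τ := by
      rw [← setIntegral_union (Ioc_disjoint_Ioi le_rfl) measurableSet_Ioi hfIoc hcase,
        Set.Ioc_union_Ioi_eq_Ioi (by norm_num : (0:ℝ) ≤ 1)]
    rw [hsplit, integral_Ioc_eq_integral_Ioo, E1, ← sub_eq_add_neg,
      ← integral_sub hf01 hg01]
    exact setIntegral_congr_fun measurableSet_Ioo hfr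
  · have h0 : ¬ IntegrableOn f (Ioi 0) := fun hh =>
      hcase (hh.mono_set (Ioi_subset_Ioi (by norm_num)))
    have hrna : ¬ IntegrableOn r (Ioo 0 1) := by
      intro hh
      have hfr2 : EqOn (f - r) g (Ioo 0 1) := fun x hx => by
        have := hfr x hx; simp only [Pi.sub_apply]; linarith
      exact hcase (E2.2 (MeasureTheory.IntegrableOn.congr_fun (hf01.sub hh) hfr2
        measurableSet_Ioo))
    rw [integral_undef h0, integral_undef hrna]
end

section
/- Let N ≥ 2, s ∈ (0,1), and t ∈ [-1,1). Then the map β ↦ B_{s,β}(t) := ∫_0^1 (τ^{-β} - 1)(τ^{N-1} - τ^{β+2s-1}) / (1 + τ² - 2τt)^{N/2+s} dτ is continuous and strictly increasing on the interval (N - 2s, N). -/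
open MeasureTheory Set

namespace Stmt2Aux

noncomputable def g (N s t β τ : ℝ) : ℝ :=
  (τ ^ (-β) - 1) * (τ ^ (N - 1) - τ ^ (β + 2 * s - 1)) /
    (1 + τ ^ 2 - 2 * τ * t) ^ (N / 2 + s)

lemma Dlb {t τ : ℝ} (ht : t < 1) (hτ0 : 0 < τ) (hτ1 : τ < 1) :
    min (1 - t) 4⁻¹ ≤ 1 + τ ^ 2 - 2 * τ * t := by
  rcases le_total τ (1/2) with h | h
  · calc min (1 - t) 4⁻¹ ≤ 4⁻¹ := min_le_right _ _
      _ ≤ 1 + τ ^ 2 - 2 * τ * t := by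
        nlinarith [sq_nonneg (1 - τ), mul_pos hτ0 (sub_pos.mpr ht)]
  · calc min (1 - t) 4⁻¹ ≤ 1 - t := min_le_left _ _
      _ ≤ 1 + τ ^ 2 - 2 * τ * t := by
        nlinarith [sq_nonneg (1 - τ), mul_nonneg (by linarith : (0:ℝ) ≤ 2 * τ - 1)
          (by linarith : (0:ℝ) ≤ 1 - t)]

lemma cpos {t : ℝ} (ht : t < 1) : (0:ℝ) < min (1 - t) 4⁻¹ :=
  lt_min (by linarith) (by norm_num)

lemma Dpos {t τ : ℝ} (ht : t < 1) (hτ0 : 0 < τ) (hτ1 : τ < 1) :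
    (0:ℝ) < 1 + τ ^ 2 - 2 * τ * t :=
  lt_of_lt_of_le (cpos ht) (Dlb ht hτ0 hτ1)

lemma f1_nonneg {β τ : ℝ} (hτ0 : 0 < τ) (hτ1 : τ < 1) (hβ : 0 ≤ β) :
    0 ≤ τ ^ (-β) - 1 := by
  have : τ ^ (0:ℝ) ≤ τ ^ (-β) :=
    Real.rpow_le_rpow_of_exponent_ge hτ0 (le_of_lt hτ1) (by linarith)
  rw [Real.rpow_zero] at this
  linarith

lemma f1_pos {β τ : ℝ} (hτ0 : 0 < τ) (hτ1 : τ < 1) (hβ : 0 < β) :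
    0 < τ ^ (-β) - 1 := by
  have : τ ^ (0:ℝ) < τ ^ (-β) :=
    Real.rpow_lt_rpow_of_exponent_gt hτ0 hτ1 (by linarith)
  rw [Real.rpow_zero] at this
  linarith

lemma f2_nonneg {N s β τ : ℝ} (hτ0 : 0 < τ) (hτ1 : τ < 1) (hβ : N - 2 * s ≤ β) :
    0 ≤ τ ^ (N - 1) - τ ^ (β + 2 * s - 1) := by
  have : τ ^ (β + 2 * s - 1) ≤ τ ^ (N - 1) :=
    Real.rpow_le_rpow_of_exponent_ge hτ0 (le_of_lt hτ1) (by linarith)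
  linarith

lemma g_nonneg {N s t β τ : ℝ} (ht : t < 1) (hτ0 : 0 < τ) (hτ1 : τ < 1)
    (hβ : N - 2 * s ≤ β) (hβ0 : 0 ≤ β) : 0 ≤ g N s t β τ := by
  unfold g
  apply div_nonneg
  · exact mul_nonneg (f1_nonneg hτ0 hτ1 hβ0) (f2_nonneg hτ0 hτ1 hβ)
  · exact Real.rpow_nonneg (le_of_lt (Dpos ht hτ0 hτ1)) _

lemma g_mono {N s t β₁ β₂ τ : ℝ} (ht : t < 1) (hτ0 : 0 < τ) (hτ1 : τ < 1)
    (hβ : N - 2 * s ≤ β₁) (hβ0 : 0 ≤ β₁) (h12 : β₁ ≤ β₂) :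
    g N s t β₁ τ ≤ g N s t β₂ τ := by
  unfold g
  have hDp : (0:ℝ) < (1 + τ ^ 2 - 2 * τ * t) ^ (N / 2 + s) :=
    Real.rpow_pos_of_pos (Dpos ht hτ0 hτ1) _
  apply div_le_div_of_nonneg_right ?_ hDp.le
  have h1 : τ ^ (-β₂) ≤ τ ^ (-β₁) ∨ τ ^ (-β₁) ≤ τ ^ (-β₂) := Or.inr
    (Real.rpow_le_rpow_of_exponent_ge hτ0 hτ1.le (by linarith))
  have h1' : τ ^ (-β₁) ≤ τ ^ (-β₂) :=
    Real.rpow_le_rpow_of_exponent_ge hτ0 hτ1.le (by linarith)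
  have h2' : τ ^ (β₂ + 2 * s - 1) ≤ τ ^ (β₁ + 2 * s - 1) :=
    Real.rpow_le_rpow_of_exponent_ge hτ0 hτ1.le (by linarith)
  exact mul_le_mul (by linarith) (by linarith) (f2_nonneg hτ0 hτ1 hβ)
    (f1_nonneg hτ0 hτ1 (by linarith))

lemma g_strict {N s t β₁ β₂ τ : ℝ} (ht : t < 1) (hτ0 : 0 < τ) (hτ1 : τ < 1)
    (hβ : N - 2 * s ≤ β₁) (hβ0 : 0 < β₁) (h12 : β₁ < β₂) :
    g N s t β₁ τ < g N s t β₂ τ := by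
  unfold g
  have hDp : (0:ℝ) < (1 + τ ^ 2 - 2 * τ * t) ^ (N / 2 + s) :=
    Real.rpow_pos_of_pos (Dpos ht hτ0 hτ1) _
  have h1 : τ ^ (-β₁) ≤ τ ^ (-β₂) :=
    Real.rpow_le_rpow_of_exponent_ge hτ0 (le_of_lt hτ1) (by linarith)
  have h2 : τ ^ (β₂ + 2 * s - 1) < τ ^ (β₁ + 2 * s - 1) :=
    Real.rpow_lt_rpow_of_exponent_gt hτ0 hτ1 (by linarith)
  have hf1 := f1_pos hτ0 hτ1 hβ0
  have hf2 := f2_nonneg (N := N) (s := s) hτ0 hτ1 hβ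
  rw [div_lt_div_iff_of_pos_right hDp]
  calc (τ ^ (-β₁) - 1) * (τ ^ (N - 1) - τ ^ (β₁ + 2 * s - 1))
      < (τ ^ (-β₁) - 1) * (τ ^ (N - 1) - τ ^ (β₂ + 2 * s - 1)) := by
        apply mul_lt_mul_of_pos_left (by linarith) hf1
    _ ≤ (τ ^ (-β₂) - 1) * (τ ^ (N - 1) - τ ^ (β₂ + 2 * s - 1)) := by
        apply mul_le_mul_of_nonneg_right (by linarith)
        linarith [f2_nonneg (N := N) (s := s) hτ0 hτ1 (le_of_lt (lt_of_le_of_lt hβ h12))]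

lemma g_bound {N s t β τ : ℝ} (ht : t < 1) (hτ0 : 0 < τ) (hτ1 : τ < 1)
    (hβ : N - 2 * s ≤ β) (hβ0 : 0 ≤ β) (hp : 0 ≤ N / 2 + s) :
    g N s t β τ ≤ τ ^ (N - 1 - β) / (min (1 - t) 4⁻¹) ^ (N / 2 + s) := by
  unfold g
  have hc := cpos ht
  have hD := Dpos ht hτ0 hτ1
  have hnum : (τ ^ (-β) - 1) * (τ ^ (N - 1) - τ ^ (β + 2 * s - 1)) ≤ τ ^ (N - 1 - β) := by
    have h1 : τ ^ (-β) - 1 ≤ τ ^ (-β) := by linarith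
    have h2 : τ ^ (N - 1) - τ ^ (β + 2 * s - 1) ≤ τ ^ (N - 1) := by
      have := Real.rpow_nonneg hτ0.le (β + 2 * s - 1); linarith
    calc (τ ^ (-β) - 1) * (τ ^ (N - 1) - τ ^ (β + 2 * s - 1))
        ≤ τ ^ (-β) * τ ^ (N - 1) :=
          mul_le_mul h1 h2 (f2_nonneg hτ0 hτ1 hβ) (Real.rpow_nonneg hτ0.le _)
      _ = τ ^ (N - 1 - β) := by
          rw [← Real.rpow_add hτ0]; ring_nf
  apply div_le_div₀ (Real.rpow_nonneg hτ0.le _) hnum (Real.rpow_pos_of_pos hc _)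
  exact Real.rpow_le_rpow hc.le (Dlb ht hτ0 hτ1) hp

lemma integrable_rpow_Ioo {r : ℝ} (hr : -1 < r) :
    IntegrableOn (fun τ : ℝ => τ ^ r) (Ioo (0:ℝ) 1) := by
  have h := intervalIntegral.intervalIntegrable_rpow' (a := (0:ℝ)) (b := 1) hr
  rw [intervalIntegrable_iff] at h
  apply h.mono_set
  rw [uIoc_of_le (by norm_num : (0:ℝ) ≤ 1)]
  exact Ioo_subset_Ioc_self

lemma g_continuousOn {N s t β : ℝ} (ht : t < 1) :
    ContinuousOn (g N s t β) (Ioo (0:ℝ) 1) := by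
  intro τ hτ
  apply ContinuousAt.continuousWithinAt
  have h0 : τ ≠ 0 := ne_of_gt hτ.1
  have hD : 1 + τ ^ 2 - 2 * τ * t ≠ 0 := ne_of_gt (Dpos ht hτ.1 hτ.2)
  unfold g
  apply ContinuousAt.div
  · exact (((Real.continuousAt_rpow_const _ _ (Or.inl h0)).sub continuousAt_const).mul
      ((Real.continuousAt_rpow_const _ _ (Or.inl h0)).sub
        (Real.continuousAt_rpow_const _ _ (Or.inl h0))))
  · exact ContinuousAt.rpow_const (by fun_prop) (Or.inl hD)
  · exact Real.rpow_pos_of_pos (Dpos ht hτ.1 hτ.2) _ |>.ne'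

lemma g_integrable {N s t β : ℝ} (ht : t < 1) (hβ : N - 2 * s ≤ β) (hβ0 : 0 ≤ β)
    (hβN : β < N) (hp : 0 ≤ N / 2 + s) : IntegrableOn (g N s t β) (Ioo (0:ℝ) 1) := by
  have hbound : IntegrableOn
      (fun τ : ℝ => τ ^ (N - 1 - β) / (min (1 - t) 4⁻¹) ^ (N / 2 + s)) (Ioo (0:ℝ) 1) :=
    (integrable_rpow_Ioo (by linarith)).div_const _
  apply Integrable.mono' hbound
    ((g_continuousOn ht).aestronglyMeasurable measurableSet_Ioo)
  filter_upwards [ae_restrict_mem measurableSet_Ioo] with τ hτ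
  rw [Real.norm_eq_abs, abs_of_nonneg (g_nonneg ht hτ.1 hτ.2 hβ hβ0)]
  exact g_bound ht hτ.1 hτ.2 hβ hβ0 hp

lemma g_cont_param {N s t τ : ℝ} (hτ0 : 0 < τ) :
    Continuous (fun β => g N s t β τ) := by
  have h0 : τ ≠ 0 := ne_of_gt hτ0
  have hc : Continuous fun y : ℝ => τ ^ y :=
    continuous_iff_continuousAt.mpr fun y => Real.continuousAt_const_rpow h0
  unfold g
  exact (((hc.comp continuous_neg).sub continuous_const).mul
    (continuous_const.sub (hc.comp (by continuity)))).div_const _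

end Stmt2Aux

open Stmt2Aux
theorem stmt2 (N s t : ℝ) (hN : 2 ≤ N) (hs : s ∈ Set.Ioo (0:ℝ) 1)
    (ht : t ∈ Set.Ico (-1:ℝ) 1) :
    ContinuousOn (fun β : ℝ => ∫ τ in Set.Ioo (0:ℝ) 1,
        (τ ^ (-β) - 1) * (τ ^ (N - 1) - τ ^ (β + 2 * s - 1)) /
          (1 + τ ^ 2 - 2 * τ * t) ^ (N / 2 + s)) (Set.Ioo (N - 2 * s) N) ∧
    StrictMonoOn (fun β : ℝ => ∫ τ in Set.Ioo (0:ℝ) 1,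
        (τ ^ (-β) - 1) * (τ ^ (N - 1) - τ ^ (β + 2 * s - 1)) /
          (1 + τ ^ 2 - 2 * τ * t) ^ (N / 2 + s)) (Set.Ioo (N - 2 * s) N) := by
  obtain ⟨hs0, hs1⟩ := hs
  obtain ⟨ht1, ht2⟩ := ht
  have hNs : 0 < N - 2 * s := by linarith
  have hp : 0 ≤ N / 2 + s := by linarith
  have hF : (fun β : ℝ => ∫ τ in Set.Ioo (0:ℝ) 1,
      (τ ^ (-β) - 1) * (τ ^ (N - 1) - τ ^ (β + 2 * s - 1)) /
        (1 + τ ^ 2 - 2 * τ * t) ^ (N / 2 + s))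
      = fun β : ℝ => ∫ τ in Set.Ioo (0:ℝ) 1, g N s t β τ := rfl
  rw [hF]
  constructor
  · -- continuity
    intro β₀ hβ₀
    apply ContinuousAt.continuousWithinAt
    obtain ⟨hb1, hb2⟩ := hβ₀
    set b := (β₀ + N) / 2 with hbdef
    have hbb : β₀ < b := by rw [hbdef]; linarith
    have hbN : b < N := by rw [hbdef]; linarith
    have hbNs : N - 2 * s < b := lt_trans hb1 hbb
    apply continuousAt_of_dominated (bound := g N s t b)
    · exact Filter.Eventually.of_forall fun β =>
        (g_continuousOn ht2).aestronglyMeasurable measurableSet_Ioo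
    · filter_upwards [Ioo_mem_nhds hb1 hbb] with β hβ
      filter_upwards [ae_restrict_mem measurableSet_Ioo] with τ hτ
      have hβ0 : 0 ≤ β := le_trans hNs.le hβ.1.le
      rw [Real.norm_eq_abs, abs_of_nonneg (g_nonneg ht2 hτ.1 hτ.2 hβ.1.le hβ0)]
      exact g_mono ht2 hτ.1 hτ.2 hβ.1.le hβ0 hβ.2.le
    · exact g_integrable ht2 hbNs.le (le_trans hNs.le hbNs.le) hbN hp
    · filter_upwards [ae_restrict_mem measurableSet_Ioo] with τ hτ
      exact (g_cont_param hτ.1).continuousAt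
  · -- strict monotonicity
    intro β₁ hβ₁ β₂ hβ₂ h12
    have h10 : 0 ≤ β₁ := le_trans hNs.le hβ₁.1.le
    have int1 := g_integrable (t := t) ht2 hβ₁.1.le h10 hβ₁.2 hp
    have int2 := g_integrable (t := t) ht2 hβ₂.1.le (le_trans hNs.le hβ₂.1.le) hβ₂.2 hp
    have hnn : 0 ≤ᵐ[volume.restrict (Ioo (0:ℝ) 1)]
        fun τ => g N s t β₂ τ - g N s t β₁ τ := by
      filter_upwards [ae_restrict_mem measurableSet_Ioo] with τ hτ
      exact sub_nonneg.mpr (g_mono ht2 hτ.1 hτ.2 hβ₁.1.le h10 h12.le)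
    have hint : IntegrableOn (fun τ => g N s t β₂ τ - g N s t β₁ τ) (Ioo (0:ℝ) 1) :=
      int2.sub int1
    have key : 0 < ∫ τ in Ioo (0:ℝ) 1, (g N s t β₂ τ - g N s t β₁ τ) := by
      rw [setIntegral_pos_iff_support_of_nonneg_ae hnn hint]
      have hsub : Ioo (0:ℝ) 1 ⊆
          Function.support (fun τ => g N s t β₂ τ - g N s t β₁ τ) ∩ Ioo (0:ℝ) 1 :=
        fun τ hτ => ⟨ne_of_gt (sub_pos.mpr
          (g_strict ht2 hτ.1 hτ.2 hβ₁.1.le (lt_of_lt_of_le hNs hβ₁.1.le) h12)), hτ⟩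
      calc (0:ENNReal) < volume (Ioo (0:ℝ) 1) := by simp [Real.volume_Ioo]
        _ ≤ _ := measure_mono hsub
    rw [integral_sub int2 int1] at key
    linarith
end
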